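/- Let U_1, …, U_n be nonempty finite sets, for each i let p_i be a probability mass function on U_i with p_i(u) > 0 for all u ∈ U_i, and let F : U_1 × ⋯ × U_n → ℝ satisfy |F(u)| ≤ M for all u. Let c > 0. For each i define the zero-mean local advantage A_i(u_i) = Σ_{u_{-i}} (∏_{j≠i} p_j(u_j)) F(u) − Σ_u (∏_j p_j(u_j)) F(u), the normalizer g_i = Σ_{u_i ∈ U_i} p_i(u_i) exp(c · A_i(u_i)), and the tilted distribution q_i(u_i) = p_i(u_i) exp(c · A_i(u_i)) / g_i. Then Σ_u (∏_i q_i(u_i)) F(u) − Σ_u (∏_i p_i(u_i)) F(u) ≥ (1/c − 2nM) · Σ_{i=1}^n KL(q_i ‖ p_i) + (1/c) · Σ_{i=1}^n log g_i, where KL(q ‖ p) = Σ_u q(u) log(q(u)/p(u)). -/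

import Mathlib

open Finset

private lemma pinsker_pointwise {p q : ℝ} (hp : 0 < p) (hq : 0 < q) :
    (q - p)^2 ≤ 2 * (q + p) * (q * Real.log (q / p) - q + p) := by
  set a := Real.sqrt q with ha
  set b := Real.sqrt p with hb
  have ha0 : 0 < a := Real.sqrt_pos.2 hq
  have hb0 : 0 < b := Real.sqrt_pos.2 hp
  have haq : a ^ 2 = q := Real.sq_sqrt hq.le
  have hbp : b ^ 2 = p := Real.sq_sqrt hp.le
  have hlog : Real.log (q / p) = 2 * (Real.log a - Real.log b) := by
    rw [Real.log_div hq.ne' hp.ne', ← haq, ← hbp, Real.log_pow, Real.log_pow]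
    push_cast; ring
  have hkey : Real.log b - Real.log a ≤ b / a - 1 := by
    have := Real.log_le_sub_one_of_pos (x := b / a) (by positivity)
    rwa [Real.log_div hb0.ne' ha0.ne'] at this
  -- q * log (q/p) ≥ 2 a^2 - 2 a b
  have h2 : 2 * a ^ 2 - 2 * a * b ≤ q * Real.log (q / p) := by
    rw [hlog, ← haq]
    have := mul_le_mul_of_nonneg_left hkey (by positivity : (0:ℝ) ≤ 2 * a ^ 2)
    have hba : 2 * a ^ 2 * (b / a) = 2 * a * b := by field_simp
    nlinarith [this]
  nlinarith [sq_nonneg (a - b), sq_nonneg (a + b), sq_nonneg (a*b - b^2), mul_pos ha0 hb0, sq_nonneg ((a-b)*(a+b)), sq_nonneg (a^2 - b^2), mul_nonneg (mul_nonneg ha0.le hb0.le) (sq_nonneg (a-b))]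

private lemma weak_pinsker {α : Type*} [Fintype α] (p q : α → ℝ)
    (hp : ∀ x, 0 < p x) (hq : ∀ x, 0 < q x)
    (hp1 : ∑ x, p x = 1) (hq1 : ∑ x, q x = 1) :
    (∑ x, |q x - p x|)^2 ≤ 4 * ∑ x, q x * Real.log (q x / p x) := by
  have hpos : ∀ x : α, (0:ℝ) < 2 * (q x + p x) := fun x => by
    have := hp x; have := hq x; linarith
  have hcs := Finset.sum_mul_sq_le_sq_mul_sq Finset.univ
    (fun x => |q x - p x| / Real.sqrt (2 * (q x + p x)))
    (fun x => Real.sqrt (2 * (q x + p x)))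
  have h1 : ∀ x ∈ Finset.univ, |q x - p x| / Real.sqrt (2 * (q x + p x)) * Real.sqrt (2 * (q x + p x))
      = |q x - p x| := fun x _ =>
    div_mul_cancel₀ _ (Real.sqrt_ne_zero'.2 (hpos x))
  rw [Finset.sum_congr rfl h1] at hcs
  have h2 : ∀ x ∈ Finset.univ, (Real.sqrt (2 * (q x + p x)))^2 = 2 * (q x + p x) :=
    fun x _ => Real.sq_sqrt (hpos x).le
  rw [Finset.sum_congr rfl h2] at hcs
  have h3 : ∑ x, 2 * (q x + p x) = 4 := by
    rw [← Finset.mul_sum, Finset.sum_add_distrib, hp1, hq1]; norm_num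
  rw [h3] at hcs
  have h4 : ∑ x, (|q x - p x| / Real.sqrt (2 * (q x + p x)))^2
      ≤ ∑ x, (q x * Real.log (q x / p x) - q x + p x) := by
    apply Finset.sum_le_sum
    intro x _
    rw [div_pow, sq_abs, Real.sq_sqrt (hpos x).le, div_le_iff₀ (hpos x)]
    have := pinsker_pointwise (hp x) (hq x)
    linarith
  have h5 : ∑ x, (q x * Real.log (q x / p x) - q x + p x)
      = ∑ x, q x * Real.log (q x / p x) := by
    rw [Finset.sum_add_distrib, Finset.sum_sub_distrib, hp1, hq1]; ring
  rw [h5] at h4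
  calc (∑ x, |q x - p x|)^2 ≤ _ * 4 := hcs
    _ ≤ (∑ x, q x * Real.log (q x / p x)) * 4 := by linarith
    _ = 4 * ∑ x, q x * Real.log (q x / p x) := by ring

private lemma pairs_sq (a : ℕ → ℝ) (n : ℕ) :
    2 * ∑ k ∈ Finset.range n, a k * ∑ m ∈ Finset.range k, a m
      = (∑ k ∈ Finset.range n, a k)^2 - ∑ k ∈ Finset.range n, (a k)^2 := by
  induction n with
  | zero => simp
  | succ n ih =>
    rw [Finset.sum_range_succ, Finset.sum_range_succ (f := a),
      Finset.sum_range_succ (f := fun k => (a k)^2)]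
    rw [mul_add] at *
    nlinarith [ih]


/-- Single-stage specialization of Lemma 3: the potential improvement under the
simultaneous exponential-tilt update of all agents is lower bounded by a KL
term plus the sum of log-normalizers. -/
theorem one_shot_npg_improvement
    {n : ℕ} {U : Fin n → Type*} [∀ i, Fintype (U i)] [∀ i, Nonempty (U i)]
    [∀ i, DecidableEq (U i)]
    (p : ∀ i, U i → ℝ) (M : ℝ)
    (hp0 : ∀ i, ∀ x : U i, 0 < p i x) (hp1 : ∀ i, ∑ x : U i, p i x = 1)
    (F : (∀ i, U i) → ℝ) (hF : ∀ u, |F u| ≤ M)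
    (c : ℝ) (hc : 0 < c)
    (A : ∀ i, U i → ℝ)
    (hA : ∀ i, ∀ x : U i, A i x =
      (∑ u : ∀ j, U j, if u i = x then
          (∏ j ∈ Finset.univ.filter (fun j => j ≠ i), p j (u j)) * F u
        else 0) - ∑ u : ∀ j, U j, (∏ j, p j (u j)) * F u)
    (g : Fin n → ℝ)
    (hg : ∀ i, g i = ∑ x : U i, p i x * Real.exp (c * A i x))
    (q : ∀ i, U i → ℝ)
    (hq : ∀ i, ∀ x : U i, q i x = p i x * Real.exp (c * A i x) / g i) :
    (∑ u : ∀ i, U i, (∏ i, q i (u i)) * F u) -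
        (∑ u : ∀ i, U i, (∏ i, p i (u i)) * F u)
      ≥ (1 / c - 2 * n * M) *
          (∑ i, ∑ x : U i, q i x * Real.log (q i x / p i x)) +
        (1 / c) * ∑ i, Real.log (g i) := by
  classical
  -- basic positivity facts
  have hg0 : ∀ i, 0 < g i := by
    intro i; rw [hg i]
    exact Finset.sum_pos (fun x _ => mul_pos (hp0 i x) (Real.exp_pos _))
      Finset.univ_nonempty
  have hq0 : ∀ i, ∀ x : U i, 0 < q i x := fun i x => by
    rw [hq i x]; exact div_pos (mul_pos (hp0 i x) (Real.exp_pos _)) (hg0 i)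
  have hq1 : ∀ i, ∑ x : U i, q i x = 1 := by
    intro i
    have e : ∑ x : U i, q i x = (∑ x : U i, p i x * Real.exp (c * A i x)) / g i := by
      rw [Finset.sum_div]; exact Finset.sum_congr rfl fun x _ => hq i x
    rw [e, ← hg i, div_self (hg0 i).ne']
  have hM : 0 ≤ M := by
    have hne : Nonempty (∀ i, U i) := ⟨fun i => Classical.arbitrary _⟩
    obtain ⟨u⟩ := hne
    exact (abs_nonneg _).trans (hF u)
  set KLf : Fin n → ℝ := fun i => ∑ x : U i, q i x * Real.log (q i x / p i x) with hKLf
  set s : Fin n → ℝ := fun i => ∑ x : U i, |q i x - p i x| with hsdef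
  have hs0 : ∀ i, 0 ≤ s i := fun i => Finset.sum_nonneg fun x _ => abs_nonneg _
  have hpinsker : ∀ i, (s i)^2 ≤ 4 * KLf i := fun i =>
    weak_pinsker (p i) (q i) (hp0 i) (hq0 i) (hp1 i) (hq1 i)
  have hKL0 : ∀ i, 0 ≤ KLf i := fun i => by nlinarith [hpinsker i, sq_nonneg (s i)]
  -- the KL identity
  have hKLid : ∀ i, ∑ x : U i, q i x * A i x = (1/c) * (KLf i + Real.log (g i)) := by
    intro i
    have hlog : ∀ x : U i, Real.log (q i x / p i x) = c * A i x - Real.log (g i) := by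
      intro x
      have hqp : q i x / p i x = Real.exp (c * A i x) / g i := by
        rw [hq i x, div_div, mul_comm (g i) (p i x),
          mul_div_mul_left _ _ (hp0 i x).ne']
      rw [hqp, Real.log_div (Real.exp_ne_zero _) (hg0 i).ne', Real.log_exp]
    have e : KLf i = c * (∑ x : U i, q i x * A i x) - Real.log (g i) := by
      simp only [hKLf]
      calc ∑ x : U i, q i x * Real.log (q i x / p i x)
          = ∑ x : U i, (c * (q i x * A i x) - q i x * Real.log (g i)) :=
            Finset.sum_congr rfl fun x _ => by rw [hlog x]; ring
        _ = c * (∑ x : U i, q i x * A i x) - (∑ x : U i, q i x) * Real.log (g i) := by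
            rw [Finset.sum_sub_distrib, Finset.mul_sum, Finset.sum_mul]
        _ = _ := by rw [hq1 i]; ring
    rw [e]; field_simp; ring
  -- interpolation family
  set mix : ℕ → ∀ i : Fin n, U i → ℝ := fun m i => if (i : ℕ) < m then q i else p i
    with hmixdef
  have hmixnn : ∀ m, ∀ i : Fin n, ∀ x : U i, 0 ≤ mix m i x := by
    intro m i x; simp only [hmixdef]
    split
    · exact (hq0 i x).le
    · exact (hp0 i x).le
  have hmixsum : ∀ m, ∀ i : Fin n, ∑ x : U i, mix m i x = 1 := by
    intro m i; simp only [hmixdef]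
    split
    · exact hq1 i
    · exact hp1 i
  set H : ℕ → ℝ := fun m => ∑ u : ∀ i, U i, (∏ i, mix m i (u i)) * F u with hHdef
  set G : Fin n → ℕ → ℝ := fun j m => ∑ u : ∀ i, U i,
      (q j (u j) - p j (u j)) * ((∏ i ∈ Finset.univ.erase j, mix m i (u i)) * F u)
    with hGdef
  have hH0 : H 0 = ∑ u : ∀ i, U i, (∏ i, p i (u i)) * F u := by
    simp [hHdef, hmixdef]
  have hHn : H n = ∑ u : ∀ i, U i, (∏ i, q i (u i)) * F u := by
    simp only [hHdef, hmixdef]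
    refine Finset.sum_congr rfl fun u _ => ?_
    congr 1
    exact Finset.prod_congr rfl fun i _ => by simp [i.isLt]
  -- L1 : step of H
  have L1 : ∀ k, ∀ hk : k < n, H (k+1) - H k = G ⟨k, hk⟩ k := by
    intro k hk
    have key : ∀ u : ∀ i, U i,
        (∏ i, mix (k+1) i (u i)) - (∏ i, mix k i (u i))
        = (q ⟨k, hk⟩ (u ⟨k, hk⟩) - p ⟨k, hk⟩ (u ⟨k, hk⟩)) *
            ∏ i ∈ Finset.univ.erase ⟨k, hk⟩, mix k i (u i) := by
      intro u
      have e1 : ∏ i, mix (k+1) i (u i)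
          = mix (k+1) ⟨k, hk⟩ (u ⟨k, hk⟩) *
              ∏ i ∈ Finset.univ.erase ⟨k, hk⟩, mix (k+1) i (u i) :=
        (Finset.mul_prod_erase Finset.univ _ (Finset.mem_univ _)).symm
      have e2 : ∏ i, mix k i (u i)
          = mix k ⟨k, hk⟩ (u ⟨k, hk⟩) *
              ∏ i ∈ Finset.univ.erase ⟨k, hk⟩, mix k i (u i) :=
        (Finset.mul_prod_erase Finset.univ _ (Finset.mem_univ _)).symm
      have e3 : ∏ i ∈ Finset.univ.erase ⟨k, hk⟩, mix (k+1) i (u i)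
          = ∏ i ∈ Finset.univ.erase ⟨k, hk⟩, mix k i (u i) := by
        refine Finset.prod_congr rfl fun i hi => ?_
        have hij : (i : ℕ) ≠ k := fun h =>
          (Finset.mem_erase.1 hi).1 (Fin.ext h)
        simp only [hmixdef]
        by_cases h : (i:ℕ) < k
        · simp [h, Nat.lt_succ_of_lt h]
        · have h2 : ¬ (i:ℕ) < k + 1 := by omega
          simp [h, h2]
      have e4 : mix (k+1) ⟨k, hk⟩ (u ⟨k, hk⟩) = q ⟨k, hk⟩ (u ⟨k, hk⟩) := by
        simp [hmixdef]
      have e5 : mix k ⟨k, hk⟩ (u ⟨k, hk⟩) = p ⟨k, hk⟩ (u ⟨k, hk⟩) := by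
        simp [hmixdef]
      rw [e1, e2, e3, e4, e5]; ring
    simp only [hHdef, hGdef]
    rw [← Finset.sum_sub_distrib]
    refine Finset.sum_congr rfl fun u _ => ?_
    rw [← sub_mul, key u]; ring
  -- L2 : G at time 0
  have L2 : ∀ j : Fin n, G j 0 = ∑ x : U j, q j x * A j x := by
    intro j
    have hmix0 : ∀ (i : Fin n) (x : U i), mix 0 i x = p i x := by
      intro i x; simp [hmixdef]
    -- expand A
    have expand : ∀ x : U j, q j x * A j x
        = (∑ u : ∀ i, U i, if u j = x then
              q j x * ((∏ i ∈ Finset.univ.erase j, p i (u i)) * F u) else 0)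
          - q j x * ∑ u : ∀ i, U i, (∏ i, p i (u i)) * F u := by
      intro x
      rw [hA j x, Finset.filter_ne' Finset.univ j, mul_sub, Finset.mul_sum]
      congr 1
      refine Finset.sum_congr rfl fun u _ => ?_
      split <;> ring
    calc G j 0 = ∑ u : ∀ i, U i,
        (q j (u j) - p j (u j)) * ((∏ i ∈ Finset.univ.erase j, p i (u i)) * F u) := by
          simp only [hGdef]
          refine Finset.sum_congr rfl fun u _ => ?_
          rw [Finset.prod_congr rfl fun i _ => hmix0 i (u i)]
      _ = (∑ u : ∀ i, U i, q j (u j) * ((∏ i ∈ Finset.univ.erase j, p i (u i)) * F u))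
          - ∑ u : ∀ i, U i, (∏ i, p i (u i)) * F u := by
          rw [← Finset.sum_sub_distrib]
          refine Finset.sum_congr rfl fun u _ => ?_
          rw [← Finset.mul_prod_erase Finset.univ (fun i => p i (u i)) (Finset.mem_univ j)]
          ring
      _ = ∑ x : U j, q j x * A j x := by
          rw [Finset.sum_congr rfl fun x _ => expand x, Finset.sum_sub_distrib]
          congr 1
          · rw [Finset.sum_comm]
            refine Finset.sum_congr rfl fun u _ => ?_
            rw [Finset.sum_ite_eq Finset.univ (u j)
              (fun x => q j x * ((∏ i ∈ Finset.univ.erase j, p i (u i)) * F u))]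
            simp
          · rw [← Finset.sum_mul, hq1 j, one_mul]
  -- L3 : step bound for G
  have L3 : ∀ j : Fin n, ∀ m, ∀ hm : m < (j : ℕ),
      |G j (m+1) - G j m| ≤ M * (s j * s ⟨m, lt_trans hm j.isLt⟩) := by
    intro j m hm
    have hmn : m < n := lt_trans hm j.isLt
    set μ : Fin n := ⟨m, hmn⟩ with hμdef
    have hμj : μ ≠ j := by
      intro h
      have : (μ : ℕ) = (j : ℕ) := by rw [h]
      simp [hμdef] at this
      omega
    have hμmem : μ ∈ Finset.univ.erase j := Finset.mem_erase.2 ⟨hμj, Finset.mem_univ μ⟩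
    -- key product identity
    have key : ∀ u : ∀ i, U i,
        (∏ i ∈ Finset.univ.erase j, mix (m+1) i (u i))
          - (∏ i ∈ Finset.univ.erase j, mix m i (u i))
        = (q μ (u μ) - p μ (u μ)) * ∏ i ∈ (Finset.univ.erase j).erase μ, mix m i (u i) := by
      intro u
      have e1 : ∏ i ∈ Finset.univ.erase j, mix (m+1) i (u i)
          = mix (m+1) μ (u μ) * ∏ i ∈ (Finset.univ.erase j).erase μ, mix (m+1) i (u i) :=
        (Finset.mul_prod_erase _ _ hμmem).symm
      have e2 : ∏ i ∈ Finset.univ.erase j, mix m i (u i)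
          = mix m μ (u μ) * ∏ i ∈ (Finset.univ.erase j).erase μ, mix m i (u i) :=
        (Finset.mul_prod_erase _ _ hμmem).symm
      have e3 : ∏ i ∈ (Finset.univ.erase j).erase μ, mix (m+1) i (u i)
          = ∏ i ∈ (Finset.univ.erase j).erase μ, mix m i (u i) := by
        refine Finset.prod_congr rfl fun i hi => ?_
        have hij : (i : ℕ) ≠ m := fun h =>
          (Finset.mem_erase.1 hi).1 (Fin.ext (by simp [hμdef, h]))
        simp only [hmixdef]
        by_cases h : (i:ℕ) < m
        · simp [h, Nat.lt_succ_of_lt h]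
        · have h2 : ¬ (i:ℕ) < m + 1 := by omega
          simp [h, h2]
      have e4 : mix (m+1) μ (u μ) = q μ (u μ) := by simp [hmixdef, hμdef]
      have e5 : mix m μ (u μ) = p μ (u μ) := by simp [hmixdef, hμdef]
      rw [e1, e2, e3, e4, e5]; ring
    -- difference as a single sum
    have hdiff : G j (m+1) - G j m = ∑ u : ∀ i, U i,
        (q j (u j) - p j (u j)) * ((q μ (u μ) - p μ (u μ)) *
          ((∏ i ∈ (Finset.univ.erase j).erase μ, mix m i (u i)) * F u)) := by
      simp only [hGdef]
      rw [← Finset.sum_sub_distrib]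
      refine Finset.sum_congr rfl fun u _ => ?_
      have : (∏ i ∈ Finset.univ.erase j, mix (m+1) i (u i)) * F u
          - (∏ i ∈ Finset.univ.erase j, mix m i (u i)) * F u
          = ((q μ (u μ) - p μ (u μ)) * ∏ i ∈ (Finset.univ.erase j).erase μ, mix m i (u i)) * F u := by
        rw [← sub_mul, key u]
      calc (q j (u j) - p j (u j)) * ((∏ i ∈ Finset.univ.erase j, mix (m+1) i (u i)) * F u)
          - (q j (u j) - p j (u j)) * ((∏ i ∈ Finset.univ.erase j, mix m i (u i)) * F u)
          = (q j (u j) - p j (u j)) *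
            ((∏ i ∈ Finset.univ.erase j, mix (m+1) i (u i)) * F u
              - (∏ i ∈ Finset.univ.erase j, mix m i (u i)) * F u) := by ring
        _ = _ := by rw [this]; ring
    -- the weight function
    set w : ∀ i : Fin n, U i → ℝ := fun i x =>
      if i = j then |q i x - p i x| else if i = μ then |q i x - p i x| else mix m i x with hwdef
    have hwj : ∀ x : U j, w j x = |q j x - p j x| := fun x => by simp [hwdef]
    have hwμ : ∀ x : U μ, w μ x = |q μ x - p μ x| := fun x => by simp [hwdef, hμj]
    have hwother : ∀ i ∈ (Finset.univ.erase j).erase μ, ∀ x : U i, w i x = mix m i x := by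
      intro i hi x
      have h1 : i ≠ μ := (Finset.mem_erase.1 hi).1
      have h2 : i ≠ j := (Finset.mem_erase.1 (Finset.mem_erase.1 hi).2).1
      simp [hwdef, h1, h2]
    -- pointwise bound
    have hptwise : ∀ u : ∀ i, U i,
        |(q j (u j) - p j (u j)) * ((q μ (u μ) - p μ (u μ)) *
          ((∏ i ∈ (Finset.univ.erase j).erase μ, mix m i (u i)) * F u))|
        ≤ (∏ i, w i (u i)) * M := by
      intro u
      have hR : 0 ≤ ∏ i ∈ (Finset.univ.erase j).erase μ, mix m i (u i) :=
        Finset.prod_nonneg fun i _ => hmixnn m i (u i)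
      have hprodw : ∏ i, w i (u i)
          = |q j (u j) - p j (u j)| * (|q μ (u μ) - p μ (u μ)| *
              ∏ i ∈ (Finset.univ.erase j).erase μ, mix m i (u i)) := by
        rw [← Finset.mul_prod_erase Finset.univ (fun i => w i (u i)) (Finset.mem_univ j),
          ← Finset.mul_prod_erase _ (fun i => w i (u i)) hμmem, hwj, hwμ,
          Finset.prod_congr rfl fun i hi => hwother i hi (u i)]
      calc |(q j (u j) - p j (u j)) * ((q μ (u μ) - p μ (u μ)) *
          ((∏ i ∈ (Finset.univ.erase j).erase μ, mix m i (u i)) * F u))|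
          = (|q j (u j) - p j (u j)| * (|q μ (u μ) - p μ (u μ)| *
              (∏ i ∈ (Finset.univ.erase j).erase μ, mix m i (u i)))) * |F u| := by
            rw [abs_mul, abs_mul, abs_mul, abs_of_nonneg hR]; ring
        _ ≤ (|q j (u j) - p j (u j)| * (|q μ (u μ) - p μ (u μ)| *
              (∏ i ∈ (Finset.univ.erase j).erase μ, mix m i (u i)))) * M := by
            refine mul_le_mul_of_nonneg_left (hF u) ?_
            positivity
        _ = (∏ i, w i (u i)) * M := by rw [hprodw]
    -- sum of weights
    have hsumw : ∑ u : ∀ i, U i, ∏ i, w i (u i) = s j * s μ := by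
      rw [← Fintype.prod_sum w]
      rw [← Finset.mul_prod_erase Finset.univ (fun i => ∑ x : U i, w i x) (Finset.mem_univ j),
        ← Finset.mul_prod_erase _ (fun i => ∑ x : U i, w i x) hμmem]
      have h1 : ∑ x : U j, w j x = s j := by
        rw [hsdef]; exact Finset.sum_congr rfl fun x _ => hwj x
      have h2 : ∑ x : U μ, w μ x = s μ := by
        rw [hsdef]; exact Finset.sum_congr rfl fun x _ => hwμ x
      have h3 : ∏ i ∈ (Finset.univ.erase j).erase μ, (∑ x : U i, w i x) = 1 := by
        refine Finset.prod_eq_one fun i hi => ?_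
        rw [Finset.sum_congr rfl fun x _ => hwother i hi x]
        exact hmixsum m i
      rw [h1, h2, h3, mul_one]
    -- conclude
    rw [hdiff]
    calc |∑ u : ∀ i, U i, (q j (u j) - p j (u j)) * ((q μ (u μ) - p μ (u μ)) *
          ((∏ i ∈ (Finset.univ.erase j).erase μ, mix m i (u i)) * F u))|
        ≤ ∑ u : ∀ i, U i, |(q j (u j) - p j (u j)) * ((q μ (u μ) - p μ (u μ)) *
          ((∏ i ∈ (Finset.univ.erase j).erase μ, mix m i (u i)) * F u))| :=
          Finset.abs_sum_le_sum_abs _ _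
      _ ≤ ∑ u : ∀ i, U i, (∏ i, w i (u i)) * M :=
          Finset.sum_le_sum fun u _ => hptwise u
      _ = (∑ u : ∀ i, U i, ∏ i, w i (u i)) * M := by rw [Finset.sum_mul]
      _ = (s j * s μ) * M := by rw [hsumw]
      _ = M * (s j * s μ) := by ring
  -- nat-indexed total variations
  set a : ℕ → ℝ := fun m => if h : m < n then s ⟨m, h⟩ else 0 with hadef
  have ha0 : ∀ m, 0 ≤ a m := by
    intro m; simp only [hadef]; split
    · exact hs0 _
    · exact le_refl 0
  -- L4: per-agent lower bound
  have L4 : ∀ k, ∀ hk : k < n,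
      H (k+1) - H k ≥ (∑ x : U ⟨k, hk⟩, q ⟨k, hk⟩ x * A ⟨k, hk⟩ x)
        - M * (a k * ∑ m ∈ Finset.range k, a m) := by
    intro k hk
    rw [L1 k hk, ← L2 ⟨k, hk⟩]
    have htel : G ⟨k, hk⟩ k - G ⟨k, hk⟩ 0
        = ∑ m ∈ Finset.range k, (G ⟨k, hk⟩ (m+1) - G ⟨k, hk⟩ m) :=
      (Finset.sum_range_sub (fun m => G ⟨k, hk⟩ m) k).symm
    have hbd : |G ⟨k, hk⟩ k - G ⟨k, hk⟩ 0| ≤ M * (a k * ∑ m ∈ Finset.range k, a m) := by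
      rw [htel]
      refine le_trans (Finset.abs_sum_le_sum_abs _ _) ?_
      have hak : a k = s ⟨k, hk⟩ := by rw [hadef]; exact dif_pos hk
      rw [hak, Finset.mul_sum, Finset.mul_sum]
      refine Finset.sum_le_sum fun m hm => ?_
      have hmk : m < k := Finset.mem_range.1 hm
      have hmn : m < n := lt_trans hmk hk
      have ham : a m = s ⟨m, hmn⟩ := by rw [hadef]; exact dif_pos hmn
      rw [ham]
      exact L3 ⟨k, hk⟩ m hmk
    have := abs_le.1 hbd
    linarith [this.1]
  -- QA as nat-function
  set QA : ℕ → ℝ := fun k => if h : k < n then ∑ x : U ⟨k, h⟩, q ⟨k, h⟩ x * A ⟨k, h⟩ x else 0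
    with hQAdef
  -- sum over range n
  have main : H n - H 0 ≥ (∑ k ∈ Finset.range n, QA k)
      - M * ∑ k ∈ Finset.range n, a k * ∑ m ∈ Finset.range k, a m := by
    rw [← Finset.sum_range_sub H n, Finset.mul_sum, ← Finset.sum_sub_distrib]
    refine Finset.sum_le_sum fun k hk => ?_
    have hkn : k < n := Finset.mem_range.1 hk
    have := L4 k hkn
    have hQAk : QA k = ∑ x : U ⟨k, hkn⟩, q ⟨k, hkn⟩ x * A ⟨k, hkn⟩ x := by
      rw [hQAdef]; exact dif_pos hkn
    rw [hQAk]
    linarith [this]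
  -- identify ∑ QA with Fin-sums
  have hQAsum : ∑ k ∈ Finset.range n, QA k
      = (1/c) * (∑ i, KLf i) + (1/c) * ∑ i, Real.log (g i) := by
    rw [← Fin.sum_univ_eq_sum_range QA n]
    have : ∀ i : Fin n, QA (i : ℕ) = (1/c) * (KLf i + Real.log (g i)) := by
      intro i
      simp only [hQAdef]
      have h : (i : ℕ) < n := i.isLt
      rw [dif_pos h]
      have : (⟨(i : ℕ), h⟩ : Fin n) = i := Fin.eta i h
      rw [this, hKLid i]
    rw [Finset.sum_congr rfl fun i _ => this i]
    rw [Finset.mul_sum, Finset.mul_sum, ← Finset.sum_add_distrib]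
    exact Finset.sum_congr rfl fun i _ => by ring
  -- error bound
  have herr : M * ∑ k ∈ Finset.range n, a k * ∑ m ∈ Finset.range k, a m
      ≤ 2 * n * M * (∑ i, KLf i) := by
    have h1 := pairs_sq a n
    have h2 : (∑ k ∈ Finset.range n, a k)^2 ≤ n * ∑ k ∈ Finset.range n, (a k)^2 := by
      have := sq_sum_le_card_mul_sum_sq (s := Finset.range n) (f := a)
      simpa using this
    have h3 : ∑ k ∈ Finset.range n, (a k)^2 ≤ 4 * ∑ i, KLf i := by
      have e : ∑ k ∈ Finset.range n, (a k)^2 = ∑ i : Fin n, (s i)^2 := by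
        rw [← Fin.sum_univ_eq_sum_range (fun k => (a k)^2) n]
        refine Finset.sum_congr rfl fun i _ => ?_
        simp only [hadef]
        rw [dif_pos i.isLt, Fin.eta]
      rw [e]
      calc ∑ i : Fin n, (s i)^2 ≤ ∑ i : Fin n, 4 * KLf i :=
            Finset.sum_le_sum fun i _ => hpinsker i
        _ = 4 * ∑ i, KLf i := by rw [← Finset.mul_sum]
    have hKLsum : 0 ≤ ∑ i, KLf i := Finset.sum_nonneg fun i _ => hKL0 i
    have hsq : 0 ≤ ∑ k ∈ Finset.range n, (a k)^2 :=
      Finset.sum_nonneg fun k _ => sq_nonneg _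
    nlinarith [h1, h2, h3, hKLsum, hsq, mul_le_mul_of_nonneg_left h3 hM]
  rw [← hHn, ← hH0]
  have hfin : (1 / c - 2 * n * M) * (∑ i, KLf i) + (1 / c) * ∑ i, Real.log (g i)
      = ((1/c) * (∑ i, KLf i) + (1/c) * ∑ i, Real.log (g i)) - 2 * n * M * (∑ i, KLf i) := by
    ring
  rw [hfin, ← hQAsum]
  linarith [main, herr]
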